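/- Let N ≥ 1, s ∈ (1/2,1), γ ∈ (0,2s), and let v(x) = |x|^γ on ℝ^N. Then there exists a constant c_γ ∈ ℝ such that 𝓘_{x̂} v(x) = c_γ |x|^{γ−2s} for all x ≠ 0, where x̂ = x/|x|; explicitly c_γ = C_s ∫₀^∞ [ |1+τ|^γ + |1−τ|^γ − 2 ] τ^{−(1+2s)} dτ. Moreover c_γ < 0 if γ ∈ (0, 2s−1), c_γ = 0 if γ = 2s−1, and c_γ > 0 if γ ∈ (2s−1, 1). -/

import Mathlib

open MeasureTheory Real Set Filter Topology

noncomputable section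

abbrev E (N : ℕ) := EuclideanSpace ℝ (Fin N)

/-- The one-dimensional directional fractional operator `𝓘_ξ u(x)`. -/
noncomputable def Iop (N : ℕ) (s Cs : ℝ) (u : E N → ℝ) (ξ x : E N) : ℝ :=
  Cs * ∫ τ in Ioi (0:ℝ), (u (x + τ • ξ) + u (x - τ • ξ) - 2 * u x) * τ ^ (-(1 + 2*s))


lemma inv_diff_le {x : ℝ} (hx0 : 0 ≤ x) (hx : x ≤ 1/2) :
    (1-x)⁻¹ - (1+x)⁻¹ ≤ 4*x := by
  have h1 : (0:ℝ) < 1 - x := by linarith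
  have h2 : (0:ℝ) < 1 + x := by linarith
  have e1 : (1-x)⁻¹ ≤ 1 + 2*x := by
    rw [← one_div, div_le_iff₀ h1]; nlinarith
  have e2 : 1 - x ≤ (1+x)⁻¹ := by
    rw [← one_div, le_div_iff₀ h2]; nlinarith
  linarith

lemma rpow_diff_bounds {p x : ℝ} (hp0 : 0 < p) (hp2 : p < 2) (hx0 : 0 ≤ x) (hx : x ≤ 1/2) :
    (1+x)^(p-1) - (1-x)^(p-1) ≤ 2*x ∧ (1-x)^(p-1) - (1+x)^(p-1) ≤ 4*x := by
  have h1 : (0:ℝ) < 1 - x := by linarith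
  have h2 : (1:ℝ) ≤ 1 + x := by linarith
  have a1 : (1+x)^(p-1) ≤ (1+x)^(1:ℝ) :=
    Real.rpow_le_rpow_of_exponent_le h2 (by linarith)
  have a2 : (1-x)^(1:ℝ) ≤ (1-x)^(p-1) :=
    Real.rpow_le_rpow_of_exponent_ge h1 (by linarith) (by linarith)
  have a3 : (1-x)^(p-1) ≤ (1-x)^(-1:ℝ) :=
    Real.rpow_le_rpow_of_exponent_ge h1 (by linarith) (by linarith)
  have a4 : (1+x)^(-1:ℝ) ≤ (1+x)^(p-1) :=
    Real.rpow_le_rpow_of_exponent_le h2 (by linarith)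
  rw [Real.rpow_one] at a1 a2
  rw [Real.rpow_neg_one] at a3 a4
  have := inv_diff_le hx0 hx
  constructor <;> linarith

lemma quadB {p : ℝ} (hp0 : 0 < p) (hp2 : p < 2) {x : ℝ} (hx0 : 0 ≤ x) (hx : x ≤ 1/2) :
    |(1+x)^p + (1-x)^p - 2| ≤ 8*x^2 := by
  have key : ∀ ε : ℝ, ε = 1 ∨ ε = -1 →
      0 ≤ 8*x^2 + ε*((1+x)^p + (1-x)^p - 2) := by
    intro ε hε
    set g : ℝ → ℝ := fun y => 8*y^2 + ε*((1+y)^p + (1-y)^p - 2) with hg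
    have hd : ∀ y ∈ Ioo (0:ℝ) (1/2), HasDerivAt g
        (16*y + ε*(p*(1+y)^(p-1) - p*(1-y)^(p-1))) y := by
      intro y hy
      have hy1 : (0:ℝ) < 1 + y := by nlinarith [hy.1]
      have hy2 : (0:ℝ) < 1 - y := by nlinarith [hy.2]
      have d1 : HasDerivAt (fun z : ℝ => (1+z)^p) (1 * p * (1+y)^(p-1)) y :=
        ((hasDerivAt_id y).const_add 1).rpow_const (Or.inl hy1.ne')
      have d2 : HasDerivAt (fun z : ℝ => (1-z)^p) ((-1) * p * (1-y)^(p-1)) y :=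
        ((hasDerivAt_id y).const_sub 1).rpow_const (Or.inl hy2.ne')
      have d3 : HasDerivAt (fun z : ℝ => 8*z^2) (8*(2*y)) y := by
        simpa using (hasDerivAt_pow 2 y).const_mul (8:ℝ)
      have := d3.add (((d1.add d2).sub_const 2).const_mul ε)
      convert this using 1
      · rfl
      · rfl
      · rfl
      ring
    have hmono : MonotoneOn g (Icc (0:ℝ) (1/2)) := by
      apply monotoneOn_of_deriv_nonneg (convex_Icc _ _)
      · apply Continuous.continuousOn
        apply (continuous_const.mul (continuous_pow 2)).add
        apply continuous_const.mul
        apply Continuous.sub _ continuous_const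
        apply Continuous.add
        · exact (continuous_const.add continuous_id).rpow_const (fun _ => Or.inr hp0.le)
        · exact (continuous_const.sub continuous_id).rpow_const (fun _ => Or.inr hp0.le)
      · rw [interior_Icc]
        intro y hy
        exact (hd y hy).differentiableAt.differentiableWithinAt
      · rw [interior_Icc]
        intro y hy
        rw [(hd y hy).deriv]
        obtain ⟨B1, B2⟩ := rpow_diff_bounds hp0 hp2 hy.1.le hy.2.le
        have e1 : p*((1+y)^(p-1) - (1-y)^(p-1)) ≤ p*(2*y) :=
          mul_le_mul_of_nonneg_left B1 hp0.le
        have e2 : p*((1-y)^(p-1) - (1+y)^(p-1)) ≤ p*(4*y) :=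
          mul_le_mul_of_nonneg_left B2 hp0.le
        have e3 : p*(4*y) ≤ 8*y := by nlinarith [hy.1]
        have e4 : p*(2*y) ≤ 8*y := by nlinarith [hy.1]
        rcases hε with rfl | rfl <;> nlinarith [hy.1]
    have h0 : g 0 = 0 := by norm_num [hg, Real.one_rpow]
    have := hmono (left_mem_Icc.2 (by norm_num)) (mem_Icc.2 ⟨hx0, hx⟩) hx0
    rw [h0] at this
    simpa [hg] using this
  have k1 := key 1 (Or.inl rfl)
  have k2 := key (-1) (Or.inr rfl)
  rw [abs_le]; constructor <;> nlinarith


def gfun (γ s : ℝ) : ℝ → ℝ := fun τ => (|1+τ|^γ + |1-τ|^γ - 2) * τ^(-(1+2*s))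
def Hfun (γ s : ℝ) : ℝ → ℝ := fun σ => ((1+σ)^γ + (1-σ)^γ - 2*σ^γ) * σ^(2*s-1-γ)

lemma h_neg {γ σ : ℝ} (hγ0 : 0 < γ) (hγ1 : γ < 1) (hσ0 : 0 < σ) (hσ1 : σ < 1) :
    (1+σ)^γ + (1-σ)^γ < 2 := by
  have hne : (1+σ) ≠ (1-σ) := by intro h; linarith
  have := (Real.strictConcaveOn_rpow hγ0 hγ1).2
    (show (1+σ) ∈ Ici (0:ℝ) by simp; linarith)
    (show (1-σ) ∈ Ici (0:ℝ) by simp; linarith)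
    hne one_half_pos one_half_pos (by norm_num)
  simp only [smul_eq_mul] at this
  have harg : (1/2 : ℝ)*(1+σ) + (1/2 : ℝ)*(1-σ) = 1 := by ring
  rw [harg, Real.one_rpow] at this
  linarith

lemma phi_lt {γ s₁ s₂ σ : ℝ} (hγ0 : 0 < γ) (hγ1 : γ < 1) (hs₁ : 1/2 < s₁)
    (h12 : s₁ < s₂) (hσ0 : 0 < σ) (hσ1 : σ < 1) :
    gfun γ s₂ σ + Hfun γ s₂ σ < gfun γ s₁ σ + Hfun γ s₁ σ := by
  have ha1 : |1+σ| = 1+σ := abs_of_pos (by linarith)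
  have ha2 : |1-σ| = 1-σ := abs_of_pos (by linarith)
  simp only [gfun, Hfun, ha1, ha2]
  set P := (1+σ)^γ with hP
  set Q := (1-σ)^γ with hQ
  set T := σ^γ with hT
  set u₁ := σ^(-(1+2*s₁)) with hu₁
  set u₂ := σ^(-(1+2*s₂)) with hu₂
  set w₁ := σ^(2*s₁-1-γ) with hw₁
  set w₂ := σ^(2*s₂-1-γ) with hw₂
  set c := σ^(2*s₁+2*s₂-γ) with hc
  have hneg : P + Q - 2 < 0 := by
    have := h_neg hγ0 hγ1 hσ0 hσ1; linarith
  have hD : u₁ < u₂ := Real.rpow_lt_rpow_of_exponent_gt hσ0 hσ1 (by linarith)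
  have hc0 : 0 < c := Real.rpow_pos_of_pos hσ0 _
  have hc1 : c < 1 := Real.rpow_lt_one hσ0.le hσ1 (by linarith)
  have hT1 : T < 1 := Real.rpow_lt_one hσ0.le hσ1 hγ0
  have c3 : w₁ - w₂ = c * (u₂ - u₁) := by
    rw [hw₁, hw₂, hc, hu₁, hu₂, mul_sub, ← Real.rpow_add hσ0, ← Real.rpow_add hσ0]
    have e1 : 2*s₁+2*s₂-γ + -(1+2*s₂) = 2*s₁-1-γ := by ring
    have e2 : 2*s₁+2*s₂-γ + -(1+2*s₁) = 2*s₂-1-γ := by ring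
    rw [e1, e2]
  have key : (P+Q-2)*u₂ + (P+Q-2*T)*w₂ - ((P+Q-2)*u₁ + (P+Q-2*T)*w₁)
      = (u₂-u₁)*((1-c)*(P+Q-2) + c*(2*T-2)) := by
    have : w₂ = w₁ - c*(u₂-u₁) := by linarith [c3]
    rw [this]; ring
  have t3 : (u₂-u₁)*((1-c)*(P+Q-2) + c*(2*T-2)) < 0 := by
    apply mul_neg_of_pos_of_neg (by linarith)
    have t1 : 0 < (1-c)*(2-(P+Q)) := mul_pos (by linarith) (by linarith)
    have t2 : 0 < c*(2-2*T) := mul_pos hc0 (by linarith)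
    nlinarith
  linarith




lemma cont_habs {γ : ℝ} (hγ : 0 ≤ γ) :
    Continuous (fun σ : ℝ => |1+σ| ^ γ + |1-σ| ^ γ - 2) := by
  apply Continuous.sub _ continuous_const
  apply Continuous.add
  · exact ((continuous_const.add continuous_id).abs).rpow_const (fun _ => Or.inr hγ)
  · exact ((continuous_const.sub continuous_id).abs).rpow_const (fun _ => Or.inr hγ)

lemma contOn_gfun {γ s : ℝ} (hγ : 0 ≤ γ) :
    ContinuousOn (gfun γ s) {σ : ℝ | 0 < σ} := by
  apply ContinuousOn.mul ((cont_habs hγ).continuousOn)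
  exact continuousOn_id.rpow_const (fun x hx => Or.inl (ne_of_gt hx))

lemma contOn_Hfun {γ s : ℝ} (hγ : 0 ≤ γ) :
    ContinuousOn (Hfun γ s) {σ : ℝ | 0 < σ} := by
  apply ContinuousOn.mul
  · apply ContinuousOn.sub
    apply ContinuousOn.add
    · exact ((continuous_const.add continuous_id).rpow_const
        (fun _ => Or.inr hγ)).continuousOn
    · exact ((continuous_const.sub continuous_id).rpow_const
        (fun _ => Or.inr hγ)).continuousOn
    · exact (continuous_const.mul (continuous_id.rpow_const
        (fun _ => Or.inr hγ))).continuousOn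
  · exact continuousOn_id.rpow_const (fun x hx => Or.inl (ne_of_gt hx))

lemma rpow_int_Ioo {r : ℝ} (hr : -1 < r) :
    IntegrableOn (fun σ : ℝ => σ ^ r) (Ioo (0:ℝ) 1) := by
  have h := intervalIntegral.intervalIntegrable_rpow' (a := 0) (b := 1) hr
  rw [intervalIntegrable_iff_integrableOn_Ioo_of_le (by norm_num)] at h
  exact h

lemma habs_le_quad {γ σ : ℝ} (hγ0 : 0 < γ) (hγ1 : γ < 1) (hσ0 : 0 < σ) (hσ : σ ≤ 1/2) :
    |(|1+σ| ^ γ + |1-σ| ^ γ - 2)| ≤ 8 * σ^2 := by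
  have ha1 : |1+σ| = 1+σ := abs_of_pos (by linarith)
  have ha2 : |1-σ| = 1-σ := abs_of_pos (by linarith)
  rw [ha1, ha2]
  exact quadB hγ0 (by linarith) hσ0.le hσ

lemma habs_le_const {γ σ : ℝ} (hγ0 : 0 < γ) (hγ1 : γ < 1) (hσ0 : 0 < σ) (hσ1 : σ < 1) :
    |(|1+σ| ^ γ + |1-σ| ^ γ - 2)| ≤ 2 := by
  have ha1 : |1+σ| = 1+σ := abs_of_pos (by linarith)
  have ha2 : |1-σ| = 1-σ := abs_of_pos (by linarith)
  rw [ha1, ha2]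
  have hP : (1+σ)^γ ≤ 2 := by
    calc (1+σ)^γ ≤ (1+σ)^(1:ℝ) :=
          Real.rpow_le_rpow_of_exponent_le (by linarith) (by linarith)
    _ = 1 + σ := Real.rpow_one _
    _ ≤ 2 := by linarith
  have hQ : (1-σ)^γ ≤ 1 := Real.rpow_le_one (by linarith) (by linarith) hγ0.le
  have hP0 : (0:ℝ) ≤ (1+σ)^γ := Real.rpow_nonneg (by linarith) _
  have hQ0 : (0:ℝ) ≤ (1-σ)^γ := Real.rpow_nonneg (by linarith) _
  rw [abs_le]; constructor <;> linarith

lemma int_g_Ioo {γ s : ℝ} (hγ0 : 0 < γ) (hγ1 : γ < 1) (hs1 : 1/2 < s) (hs2 : s < 1) :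
    IntegrableOn (gfun γ s) (Ioo (0:ℝ) 1) := by
  have hM : IntegrableOn (fun σ : ℝ => 8 * σ^(1-2*s) + 40) (Ioo (0:ℝ) 1) := by
    apply (((rpow_int_Ioo (by linarith)).const_mul 8).add _)
    exact integrableOn_const measure_Ioo_lt_top.ne
  apply Integrable.mono' hM
  · exact ((contOn_gfun hγ0.le).mono (fun x hx => hx.1)).aestronglyMeasurable measurableSet_Ioo
  · filter_upwards [ae_restrict_mem measurableSet_Ioo] with σ hσ
    obtain ⟨hσ0, hσ1⟩ := hσ
    have hw0 : (0:ℝ) < σ^(-(1+2*s)) := Real.rpow_pos_of_pos hσ0 _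
    have hnorm : ‖gfun γ s σ‖ = |(|1+σ| ^ γ + |1-σ| ^ γ - 2)| * σ^(-(1+2*s)) := by
      rw [Real.norm_eq_abs, gfun, abs_mul, abs_of_pos hw0]
    rw [hnorm]
    have hw1 : (0:ℝ) ≤ σ^(1-2*s) := (Real.rpow_pos_of_pos hσ0 _).le
    rcases le_or_gt σ (1/2) with hc | hc
    · have hb := habs_le_quad hγ0 hγ1 hσ0 hc
      have key : 8 * σ^2 * σ^(-(1+2*s)) = 8 * σ^(1-2*s) := by
        rw [mul_assoc, ← Real.rpow_natCast σ 2, ← Real.rpow_add hσ0]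
        congr 1
        push_cast; ring
      have : |(|1+σ| ^ γ + |1-σ| ^ γ - 2)| * σ^(-(1+2*s)) ≤ 8 * σ^2 * σ^(-(1+2*s)) := by
        apply mul_le_mul_of_nonneg_right hb hw0.le
      rw [key] at this
      linarith
    · have hb := habs_le_const hγ0 hγ1 hσ0 hσ1
      have hwle : σ^(-(1+2*s)) ≤ 8 := by
        rw [Real.rpow_neg hσ0.le]
        have h1 : ((1:ℝ)/8) ≤ σ^(1+2*s) := by
          calc ((1:ℝ)/8) = (1/2 : ℝ)^((3:ℕ):ℝ) := by
                rw [Real.rpow_natCast]; norm_num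
          _ ≤ (1/2 : ℝ)^(1+2*s) := by
                apply Real.rpow_le_rpow_of_exponent_ge (by norm_num) (by norm_num)
                push_cast; linarith
          _ ≤ σ^(1+2*s) := Real.rpow_le_rpow (by norm_num) hc.le (by linarith)
        have h2 : (8:ℝ)⁻¹ ≤ σ^(1+2*s) := by
          rw [show (8:ℝ)⁻¹ = 1/8 by norm_num]; exact h1
        exact (inv_le_comm₀ (Real.rpow_pos_of_pos hσ0 _) (by norm_num)).mpr h2
      have : |(|1+σ| ^ γ + |1-σ| ^ γ - 2)| * σ^(-(1+2*s)) ≤ 2 * 8 :=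
        mul_le_mul hb hwle hw0.le (by norm_num)
      linarith

lemma int_H_Ioo {γ s : ℝ} (hγ0 : 0 < γ) (hγ1 : γ < 1) (hs1 : 1/2 < s) :
    IntegrableOn (Hfun γ s) (Ioo (0:ℝ) 1) := by
  have hM : IntegrableOn (fun σ : ℝ => 5 * σ^(2*s-1-γ)) (Ioo (0:ℝ) 1) :=
    (rpow_int_Ioo (by linarith)).const_mul 5
  apply Integrable.mono' hM
  · exact ((contOn_Hfun hγ0.le).mono (fun x hx => hx.1)).aestronglyMeasurable measurableSet_Ioo
  · filter_upwards [ae_restrict_mem measurableSet_Ioo] with σ hσ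
    obtain ⟨hσ0, hσ1⟩ := hσ
    have hw0 : (0:ℝ) < σ^(2*s-1-γ) := Real.rpow_pos_of_pos hσ0 _
    have hnorm : ‖Hfun γ s σ‖ = |(1+σ)^γ + (1-σ)^γ - 2*σ^γ| * σ^(2*s-1-γ) := by
      rw [Real.norm_eq_abs, Hfun, abs_mul, abs_of_pos hw0]
    rw [hnorm]
    have hb : |(1+σ)^γ + (1-σ)^γ - 2*σ^γ| ≤ 5 := by
      have hP : (1+σ)^γ ≤ 2 := by
        calc (1+σ)^γ ≤ (1+σ)^(1:ℝ) :=
              Real.rpow_le_rpow_of_exponent_le (by linarith) (by linarith)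
        _ = 1 + σ := Real.rpow_one _
        _ ≤ 2 := by linarith
      have hQ : (1-σ)^γ ≤ 1 := Real.rpow_le_one (by linarith) (by linarith) hγ0.le
      have hT : σ^γ ≤ 1 := Real.rpow_le_one hσ0.le hσ1.le hγ0.le
      have hP0 : (0:ℝ) ≤ (1+σ)^γ := Real.rpow_nonneg (by linarith) _
      have hQ0 : (0:ℝ) ≤ (1-σ)^γ := Real.rpow_nonneg (by linarith) _
      have hT0 : (0:ℝ) ≤ σ^γ := Real.rpow_nonneg hσ0.le _
      rw [abs_le]; constructor <;> linarith
    exact mul_le_mul_of_nonneg_right hb hw0.le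

lemma int_g_Ioi {γ s : ℝ} (hγ0 : 0 < γ) (hγ1 : γ < 1) (hγ2s : γ < 2*s) (hs1 : 1/2 < s) :
    IntegrableOn (gfun γ s) (Ioi (1:ℝ)) := by
  have hM : IntegrableOn (fun τ : ℝ => 5 * τ^(γ-1-2*s)) (Ioi (1:ℝ)) :=
    (integrableOn_Ioi_rpow_of_lt (by linarith) one_pos).const_mul 5
  apply Integrable.mono' hM
  · apply ((contOn_gfun hγ0.le).mono (fun x (hx : x ∈ Ioi (1:ℝ)) => _)).aestronglyMeasurable
      measurableSet_Ioi
    intro x hx; exact lt_trans one_pos (mem_Ioi.mp hx)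
  · filter_upwards [ae_restrict_mem measurableSet_Ioi] with τ hτ
    have hτ1 : (1:ℝ) < τ := hτ
    have hτ0 : (0:ℝ) < τ := lt_trans one_pos hτ1
    have hw0 : (0:ℝ) < τ^(-(1+2*s)) := Real.rpow_pos_of_pos hτ0 _
    have hnorm : ‖gfun γ s τ‖ = |(|1+τ| ^ γ + |1-τ| ^ γ - 2)| * τ^(-(1+2*s)) := by
      rw [Real.norm_eq_abs, gfun, abs_mul, abs_of_pos hw0]
    rw [hnorm]
    have ha1 : |1+τ| = 1+τ := abs_of_pos (by linarith)
    have ha2 : |1-τ| = τ-1 := by rw [abs_sub_comm]; exact abs_of_pos (by linarith)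
    have hτγ1 : (1:ℝ) ≤ τ^γ := by
      calc (1:ℝ) = 1^γ := (Real.one_rpow _).symm
      _ ≤ τ^γ := Real.rpow_le_rpow (by norm_num) hτ1.le hγ0.le
    have hb : |(|1+τ| ^ γ + |1-τ| ^ γ - 2)| ≤ 5 * τ^γ := by
      rw [ha1, ha2]
      have hP : (1+τ)^γ ≤ 2 * τ^γ := by
        calc (1+τ)^γ ≤ (2*τ)^γ := Real.rpow_le_rpow (by linarith) (by linarith) hγ0.le
        _ = 2^γ * τ^γ := Real.mul_rpow (by norm_num) hτ0.le
        _ ≤ 2 * τ^γ := by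
              apply mul_le_mul_of_nonneg_right _ (by positivity)
              calc (2:ℝ)^γ ≤ (2:ℝ)^(1:ℝ) :=
                    Real.rpow_le_rpow_of_exponent_le (by norm_num) (by linarith)
              _ = 2 := Real.rpow_one _
      have hQ : (τ-1)^γ ≤ τ^γ := Real.rpow_le_rpow (by linarith) (by linarith) hγ0.le
      have hP0 : (0:ℝ) ≤ (1+τ)^γ := Real.rpow_nonneg (by linarith) _
      have hQ0 : (0:ℝ) ≤ (τ-1)^γ := Real.rpow_nonneg (by linarith) _
      rw [abs_le]; constructor <;> nlinarith
    calc |(|1+τ| ^ γ + |1-τ| ^ γ - 2)| * τ^(-(1+2*s)) ≤ (5 * τ^γ) * τ^(-(1+2*s)) :=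
          mul_le_mul_of_nonneg_right hb hw0.le
    _ = 5 * τ^(γ-1-2*s) := by
          rw [mul_assoc, ← Real.rpow_add hτ0]
          congr 1
          ring




lemma cov_eq {γ s : ℝ} (hγ0 : 0 < γ) :
    ∫ τ in Ioi (1:ℝ), gfun γ s τ = ∫ σ in Ioo (0:ℝ) 1, Hfun γ s σ := by
  have himg : (fun σ : ℝ => σ⁻¹) '' (Ioo 0 1) = Ioi 1 := by
    ext y
    simp only [mem_image, mem_Ioo, mem_Ioi]
    constructor
    · rintro ⟨x, ⟨hx0, hx1⟩, rfl⟩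
      rw [show x⁻¹ = 1/x from (one_div x).symm, lt_div_iff₀ hx0]
      linarith
    · intro hy
      have hy0 : (0:ℝ) < y := lt_trans one_pos hy
      refine ⟨y⁻¹, ⟨by positivity, ?_⟩, inv_inv y⟩
      rw [show y⁻¹ = 1/y from (one_div y).symm, div_lt_one hy0]
      linarith
  have hderiv : ∀ x ∈ Ioo (0:ℝ) 1,
      HasDerivWithinAt (fun σ : ℝ => σ⁻¹) (-(x^2)⁻¹) (Ioo 0 1) x :=
    fun x hx => (hasDerivAt_inv (ne_of_gt hx.1)).hasDerivWithinAt
  have hinj : InjOn (fun σ : ℝ => σ⁻¹) (Ioo 0 1) := inv_injective.injOn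
  have := integral_image_eq_integral_abs_deriv_smul measurableSet_Ioo hderiv hinj (gfun γ s)
  rw [himg] at this
  rw [this]
  apply setIntegral_congr_fun measurableSet_Ioo
  intro σ hσ
  obtain ⟨hσ0, hσ1⟩ := hσ
  have hT : (0:ℝ) < σ^γ := Real.rpow_pos_of_pos hσ0 _
  have e1 : |1+σ⁻¹| = (1+σ)/σ := by
    rw [abs_of_pos (by positivity)]
    field_simp
    ring
  have e2 : |1-σ⁻¹| = (1-σ)/σ := by
    rw [abs_sub_comm, abs_of_pos]
    · field_simp
    · have : (1:ℝ) < σ⁻¹ := by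
        rw [show σ⁻¹ = 1/σ from (one_div σ).symm, lt_div_iff₀ hσ0]; linarith
      linarith
  have e3 : (σ⁻¹)^(-(1+2*s)) = (σ^(-(1+2*s)))⁻¹ := Real.inv_rpow hσ0.le _
  have e4 : (σ^(-(1+2*s)))⁻¹ = σ^(1+2*s) := by
    rw [Real.rpow_neg hσ0.le, inv_inv]
  have e5 : ((1+σ)/σ)^γ = (1+σ)^γ / σ^γ := Real.div_rpow (by linarith : (0:ℝ) ≤ 1+σ) hσ0.le γ
  have e6 : ((1-σ)/σ)^γ = (1-σ)^γ / σ^γ := Real.div_rpow (by linarith : (0:ℝ) ≤ 1-σ) hσ0.le γ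
  have e7 : σ^(2*s-1-γ) = σ^(1+2*s) * (σ^(2:ℕ))⁻¹ * (σ^γ)⁻¹ := by
    rw [← Real.rpow_natCast σ 2, ← Real.rpow_neg hσ0.le, ← Real.rpow_neg hσ0.le,
      ← Real.rpow_add hσ0, ← Real.rpow_add hσ0]
    congr 1
    push_cast; ring
  simp only [gfun, Hfun, smul_eq_mul]
  rw [e1, e2, e3, e4, e5, e6, e7, abs_neg, abs_inv, abs_of_nonneg (sq_nonneg σ)]
  have h2 : (σ^(2:ℕ)) ≠ 0 := by positivity
  have h3 : σ^(1+2*s) ≠ 0 := (Real.rpow_pos_of_pos hσ0 _).ne'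
  field_simp [hT.ne', h2, h3]

lemma symm_eq {γ s : ℝ} (hγ0 : 0 < γ) (hγ1 : γ < 1) (hs1 : 1/2 < s) (hs2 : s < 1) :
    ∫ τ in Ioi (0:ℝ), gfun γ s τ
      = ∫ σ in Ioo (0:ℝ) 1, (gfun γ s σ + Hfun γ s σ) := by
  have hγ2s : γ < 2*s := by linarith
  have hIci : IntegrableOn (gfun γ s) (Ici (1:ℝ)) := by
    rw [integrableOn_Ici_iff_integrableOn_Ioi]
    exact int_g_Ioi hγ0 hγ1 hγ2s hs1
  have hIoo := int_g_Ioo hγ0 hγ1 hs1 hs2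
  have hsplit : Ioo (0:ℝ) 1 ∪ Ici 1 = Ioi 0 := Ioo_union_Ici_eq_Ioi (by norm_num)
  have hdisj : Disjoint (Ioo (0:ℝ) 1) (Ici 1) :=
    disjoint_left.mpr fun a ha ha' => absurd ha.2 (not_lt.mpr ha')
  rw [← hsplit, setIntegral_union hdisj measurableSet_Ici hIoo hIci,
    integral_Ici_eq_integral_Ioi, cov_eq hγ0,
    ← integral_add hIoo (int_H_Ioo hγ0 hγ1 hs1)]


def Phi0 (γ : ℝ) : ℝ → ℝ :=
  fun σ => ((1+σ)^γ + (1-σ)^γ - 2) * σ^(-(2+γ)) + ((1+σ)^γ + (1-σ)^γ - 2*σ^γ)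
def Ffun (γ : ℝ) : ℝ → ℝ :=
  fun σ => (1/(1+γ)) * (-(((1+σ)^(γ+1) + (1-σ)^(γ+1) - 2) * σ^(-(1+γ)))
    + (1+σ)^(γ+1) - (1-σ)^(γ+1) - 2*σ^(γ+1))


lemma rpow_succ_nonneg {γ : ℝ} (hγ0 : 0 < γ) {b : ℝ} (hb0 : 0 ≤ b) :
    b^(γ+1) = b^γ * b := by
  rcases eq_or_lt_of_le hb0 with h | h
  · rw [← h, Real.zero_rpow (by positivity : γ+1 ≠ 0), Real.zero_rpow hγ0.ne', mul_zero]
  · exact Real.rpow_add_one h.ne' γ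

lemma Ffun_hasDeriv {γ : ℝ} (hγ0 : 0 < γ) (hγ1 : γ < 1) {σ : ℝ} (hσ0 : 0 < σ)
    (hσ1 : σ ≤ 1) : HasDerivAt (Ffun γ) (Phi0 γ σ) σ := by
  have h1σ : (0:ℝ) < 1 + σ := by linarith
  have h2σ : (0:ℝ) ≤ 1 - σ := by linarith
  have dA : HasDerivAt (fun y : ℝ => (1+y)^(γ+1)) (1*(γ+1)*(1+σ)^(γ+1-1)) σ :=
    ((hasDerivAt_id σ).const_add 1).rpow_const (Or.inl h1σ.ne')
  have dB : HasDerivAt (fun y : ℝ => (1-y)^(γ+1)) ((-1)*(γ+1)*(1-σ)^(γ+1-1)) σ :=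
    ((hasDerivAt_id σ).const_sub 1).rpow_const (Or.inr (by linarith))
  have dC : HasDerivAt (fun y : ℝ => y^(-(1+γ))) ((-(1+γ))*σ^(-(1+γ)-1)) σ :=
    Real.hasDerivAt_rpow_const (Or.inl hσ0.ne')
  have dD : HasDerivAt (fun y : ℝ => y^(γ+1)) ((γ+1)*σ^(γ+1-1)) σ :=
    Real.hasDerivAt_rpow_const (Or.inl hσ0.ne')
  have dAll := ((((((dA.add dB).sub_const 2).mul dC).neg.add dA).sub dB).sub
    (dD.const_mul 2)).const_mul (1/(1+γ))
  have hF : Ffun γ = fun y : ℝ => (1/(1+γ)) *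
      (-(((1+y)^(γ+1) + (1-y)^(γ+1) - 2) * y^(-(1+γ))) + (1+y)^(γ+1)
        - (1-y)^(γ+1) - 2*y^(γ+1)) := rfl
  rw [hF]
  convert dAll using 1
  · rfl
  · rfl
  · rfl
  have r1 : γ+1-1 = γ := by ring
  have r2 : -(1+γ)-1 = -(2+γ) := by ring
  rw [r1, r2]
  have r3 : (1+σ)^(γ+1) = (1+σ)^γ * (1+σ) := rpow_succ_nonneg hγ0 h1σ.le
  have r4 : (1-σ)^(γ+1) = (1-σ)^γ * (1-σ) := rpow_succ_nonneg hγ0 h2σ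
  have r5 : σ^(γ+1) = σ^γ * σ := rpow_succ_nonneg hγ0 hσ0.le
  have r6 : σ^(-(1+γ)) = σ^(-(2+γ)) * σ := by
    rw [show -(1+γ) = -(2+γ)+1 by ring, Real.rpow_add_one hσ0.ne']
  rw [Phi0, Pi.add_apply, r3, r4, r6]
  have h1γ : (1+γ) ≠ 0 := by positivity
  field_simp
  ring

lemma Ffun_one {γ : ℝ} (hγ0 : 0 < γ) : Ffun γ 1 = 0 := by
  have h0 : ((1:ℝ)-1) = 0 := by norm_num
  simp only [Ffun, h0, Real.zero_rpow (show γ+1 ≠ 0 by positivity), Real.one_rpow]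
  ring

lemma contOn_Phi0 {γ : ℝ} (hγ0 : 0 < γ) :
    ContinuousOn (Phi0 γ) {σ : ℝ | 0 < σ} := by
  have c1 : Continuous (fun σ : ℝ => (1+σ)^γ + (1-σ)^γ - 2) := by
    apply Continuous.sub _ continuous_const
    exact ((continuous_const.add continuous_id).rpow_const (fun _ => Or.inr hγ0.le)).add
      ((continuous_const.sub continuous_id).rpow_const (fun _ => Or.inr hγ0.le))
  have c2 : Continuous (fun σ : ℝ => (1+σ)^γ + (1-σ)^γ - 2*σ^γ) := by
    apply Continuous.sub
    · exact ((continuous_const.add continuous_id).rpow_const (fun _ => Or.inr hγ0.le)).add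
        ((continuous_const.sub continuous_id).rpow_const (fun _ => Or.inr hγ0.le))
    · exact continuous_const.mul (continuous_id.rpow_const (fun _ => Or.inr hγ0.le))
  exact (c1.continuousOn.mul
    (continuousOn_id.rpow_const (fun x hx => Or.inl (ne_of_gt hx)))).add c2.continuousOn

lemma Ffun_tendsto_zero {γ : ℝ} (hγ0 : 0 < γ) (hγ1 : γ < 1) :
    Tendsto (Ffun γ) (𝓝[>] (0:ℝ)) (𝓝 0) := by
  have hT1 : Tendsto (fun a : ℝ => ((1+a)^(γ+1) + (1-a)^(γ+1) - 2) * a^(-(1+γ)))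
      (𝓝[>] (0:ℝ)) (𝓝 0) := by
    apply squeeze_zero_norm' (a := fun x : ℝ => 8*x^(1-γ))
    · filter_upwards [Ioo_mem_nhdsGT (show (0:ℝ) < 1/2 by
        norm_num)] with a ha
      obtain ⟨ha0, ha1⟩ := ha
      have hb := quadB (show (0:ℝ) < γ+1 by linarith) (by linarith) ha0.le ha1.le
      have hw0 : (0:ℝ) < a^(-(1+γ)) := Real.rpow_pos_of_pos ha0 _
      rw [norm_eq_abs, abs_mul, abs_of_pos hw0]
      calc |(1+a)^(γ+1) + (1-a)^(γ+1) - 2| * a^(-(1+γ)) ≤ 8*a^2 * a^(-(1+γ)) :=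
            mul_le_mul_of_nonneg_right hb hw0.le
      _ = 8 * a^(1-γ) := by
            rw [mul_assoc, ← Real.rpow_natCast a 2, ← Real.rpow_add ha0,
              show ((2:ℕ):ℝ) + -(1+γ) = 1-γ by push_cast; ring]
    · have hc : ContinuousAt (fun a : ℝ => a^(1-γ)) 0 :=
        Real.continuousAt_rpow_const 0 (1-γ) (Or.inr (by linarith))
      have : Tendsto (fun a : ℝ => 8*a^(1-γ)) (𝓝 (0:ℝ)) (𝓝 (8*(0:ℝ)^(1-γ))) :=
        (hc.tendsto).const_mul 8
      rw [Real.zero_rpow (by linarith : 1-γ ≠ 0), mul_zero] at this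
      exact this.mono_left (nhdsWithin_le_nhds : 𝓝[>] (0:ℝ) ≤ 𝓝 0)
  have cont1 : Continuous (fun a : ℝ => (1+a)^(γ+1)) :=
    (continuous_const.add continuous_id).rpow_const
      (fun _ : ℝ => Or.inr (by linarith : (0:ℝ) ≤ γ+1))
  have cont2 : Continuous (fun a : ℝ => (1-a)^(γ+1)) :=
    (continuous_const.sub continuous_id).rpow_const
      (fun _ : ℝ => Or.inr (by linarith : (0:ℝ) ≤ γ+1))
  have c2 : Tendsto (fun a : ℝ => (1+a)^(γ+1)) (𝓝 (0:ℝ)) (𝓝 1) := by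
    have := cont1.tendsto 0
    simp only [add_zero] at this
    rwa [Real.one_rpow] at this
  have c3 : Tendsto (fun a : ℝ => (1-a)^(γ+1)) (𝓝 (0:ℝ)) (𝓝 1) := by
    have := cont2.tendsto 0
    simp only [sub_zero] at this
    rwa [Real.one_rpow] at this
  have c4 : Tendsto (fun a : ℝ => 2*a^(γ+1)) (𝓝 (0:ℝ)) (𝓝 0) := by
    have := (Real.continuousAt_rpow_const 0 (γ+1) (Or.inr (by linarith))).tendsto.const_mul (2:ℝ)
    rw [Real.zero_rpow (by positivity : γ+1 ≠ 0), mul_zero] at this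
    exact this
  have hrest : Tendsto (fun a : ℝ => (1+a)^(γ+1) - (1-a)^(γ+1) - 2*a^(γ+1))
      (𝓝[>] (0:ℝ)) (𝓝 0) := by
    have := (c2.sub c3).sub c4
    rw [sub_self, zero_sub, neg_zero] at this
    exact this.mono_left (nhdsWithin_le_nhds : 𝓝[>] (0:ℝ) ≤ 𝓝 0)
  have := (hT1.neg.add hrest).const_mul (1/(1+γ))
  rw [neg_zero, add_zero, mul_zero] at this
  apply this.congr
  intro a
  simp only [Ffun]
  ring

lemma zero_int {γ : ℝ} (hγ0 : 0 < γ) (hγ1 : γ < 1) :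
    ∫ σ in Ioo (0:ℝ) 1, (gfun γ ((γ+1)/2) σ + Hfun γ ((γ+1)/2) σ) = 0 := by
  set s₀ := (γ+1)/2 with hs₀
  have hs₀1 : 1/2 < s₀ := by rw [hs₀]; linarith
  have hs₀2 : s₀ < 1 := by rw [hs₀]; linarith
  have heq : EqOn (fun σ => gfun γ s₀ σ + Hfun γ s₀ σ) (Phi0 γ) (Ioo (0:ℝ) 1) := by
    intro σ hσ
    obtain ⟨hσ0, hσ1⟩ := hσ
    simp only [gfun, Hfun, Phi0]
    rw [abs_of_pos (by linarith : (0:ℝ) < 1+σ), abs_of_pos (by linarith : (0:ℝ) < 1-σ),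
      show -(1+2*s₀) = -(2+γ) by rw [hs₀]; ring,
      show 2*s₀-1-γ = 0 by rw [hs₀]; ring, Real.rpow_zero, mul_one]
  rw [setIntegral_congr_fun measurableSet_Ioo heq]
  have hsum : IntegrableOn (fun σ => gfun γ s₀ σ + Hfun γ s₀ σ) (Ioo (0:ℝ) 1) :=
    (int_g_Ioo hγ0 hγ1 hs₀1 hs₀2).add (int_H_Ioo hγ0 hγ1 hs₀1)
  have hint : IntegrableOn (Phi0 γ) (Ioo (0:ℝ) 1) :=
    hsum.congr_fun heq measurableSet_Ioo
  have hcover : AECover (volume.restrict (Ioo (0:ℝ) 1)) (𝓝[>] (0:ℝ))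
      (fun a => Ioc a 1) :=
    aecover_Ioo_of_Ioc (tendsto_id.mono_right nhdsWithin_le_nhds) tendsto_const_nhds
  apply hcover.integral_eq_of_tendsto _ hint
  have hev : ∀ᶠ a in 𝓝[>] (0:ℝ),
      (∫ σ in Ioc a 1, Phi0 γ σ ∂(volume.restrict (Ioo 0 1))) = Ffun γ 1 - Ffun γ a := by
    filter_upwards [Ioo_mem_nhdsGT (show (0:ℝ) < 1 by norm_num)] with a ha
    obtain ⟨ha0, ha1⟩ := ha
    rw [Measure.restrict_restrict measurableSet_Ioc,
      show Ioc a 1 ∩ Ioo 0 1 = Ioo a 1 by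
        ext x; simp only [mem_inter_iff, mem_Ioc, mem_Ioo]
        constructor
        · rintro ⟨⟨h1, h2⟩, h3, h4⟩; exact ⟨h1, h4⟩
        · rintro ⟨h1, h2⟩; exact ⟨⟨h1, h2.le⟩, lt_trans ha0 h1, h2⟩]
    rw [← integral_Ioc_eq_integral_Ioo, ← intervalIntegral.integral_of_le ha1.le]
    apply intervalIntegral.integral_eq_sub_of_hasDerivAt
    · intro x hx
      rw [uIcc_of_le ha1.le] at hx
      exact Ffun_hasDeriv hγ0 hγ1 (lt_of_lt_of_le ha0 hx.1) hx.2
    · apply ContinuousOn.intervalIntegrable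
      apply (contOn_Phi0 hγ0).mono
      rw [uIcc_of_le ha1.le]
      intro x hx
      exact lt_of_lt_of_le ha0 hx.1
  have hlim : Tendsto (fun a => Ffun γ 1 - Ffun γ a) (𝓝[>] (0:ℝ)) (𝓝 0) := by
    rw [Ffun_one hγ0]
    simpa using (Ffun_tendsto_zero hγ0 hγ1).const_sub 0
  exact hlim.congr' (hev.mono fun a h => h.symm)

lemma Int_zero {γ : ℝ} (hγ0 : 0 < γ) (hγ1 : γ < 1) :
    ∫ τ in Ioi (0:ℝ), gfun γ ((γ+1)/2) τ = 0 := by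
  rw [symm_eq hγ0 hγ1 (by linarith) (by linarith)]
  exact zero_int hγ0 hγ1




lemma Int_lt {γ s₁ s₂ : ℝ} (hγ0 : 0 < γ) (hγ1 : γ < 1) (hs₁ : 1/2 < s₁)
    (h12 : s₁ < s₂) (hs₂2 : s₂ < 1) :
    ∫ τ in Ioi (0:ℝ), gfun γ s₂ τ < ∫ τ in Ioi (0:ℝ), gfun γ s₁ τ := by
  have hs₁2 : s₁ < 1 := lt_trans h12 hs₂2
  have hs₂ : 1/2 < s₂ := lt_trans hs₁ h12
  rw [symm_eq hγ0 hγ1 hs₁ hs₁2, symm_eq hγ0 hγ1 hs₂ hs₂2]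
  have I₁ : IntegrableOn (fun σ => gfun γ s₁ σ + Hfun γ s₁ σ) (Ioo (0:ℝ) 1) :=
    (int_g_Ioo hγ0 hγ1 hs₁ hs₁2).add (int_H_Ioo hγ0 hγ1 hs₁)
  have I₂ : IntegrableOn (fun σ => gfun γ s₂ σ + Hfun γ s₂ σ) (Ioo (0:ℝ) 1) :=
    (int_g_Ioo hγ0 hγ1 hs₂ hs₂2).add (int_H_Ioo hγ0 hγ1 hs₂)
  have hpos : 0 < ∫ σ in Ioo (0:ℝ) 1,
      ((gfun γ s₁ σ + Hfun γ s₁ σ) - (gfun γ s₂ σ + Hfun γ s₂ σ)) := by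
    rw [setIntegral_pos_iff_support_of_nonneg_ae]
    · have hsub : Ioo (0:ℝ) 1 ⊆ Function.support
          (fun σ => (gfun γ s₁ σ + Hfun γ s₁ σ) - (gfun γ s₂ σ + Hfun γ s₂ σ)) ∩ Ioo 0 1 := by
        intro σ hσ
        exact ⟨ne_of_gt (sub_pos.2 (phi_lt hγ0 hγ1 hs₁ h12 hσ.1 hσ.2)), hσ⟩
      calc (0:ENNReal) < volume (Ioo (0:ℝ) 1) := by rw [Real.volume_Ioo]; norm_num
      _ ≤ _ := measure_mono hsub
    · filter_upwards [ae_restrict_mem measurableSet_Ioo] with σ hσ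
      exact (sub_pos.2 (phi_lt hγ0 hγ1 hs₁ h12 hσ.1 hσ.2)).le
    · exact I₁.sub I₂
  rw [integral_sub I₁ I₂] at hpos
  linarith

lemma Iop_scaling {N : ℕ} {s Cs γ : ℝ} (hγ0 : 0 < γ) (hs0 : 0 < s)
    (v : E N → ℝ) (hv : ∀ x, v x = ‖x‖ ^ γ) (x : E N) (hx : x ≠ 0) :
    Iop N s Cs v (‖x‖⁻¹ • x) x
      = (Cs * ∫ τ in Ioi (0:ℝ), gfun γ s τ) * ‖x‖ ^ (γ - 2*s) := by
  set r := ‖x‖ with hr'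
  have hr : 0 < r := norm_pos_iff.2 hx
  have key : ∀ τ ∈ Ioi (0:ℝ),
      (v (x + τ • (r⁻¹ • x)) + v (x - τ • (r⁻¹ • x)) - 2 * v x) * τ ^ (-(1 + 2*s))
        = r^(γ-1-2*s) * gfun γ s (r⁻¹ * τ) := by
    intro τ hτ
    have hτ0 : (0:ℝ) < τ := hτ
    have hplus : x + τ • (r⁻¹ • x) = (1 + r⁻¹ * τ) • x := by
      rw [smul_smul, add_smul, one_smul, mul_comm]
    have hminus : x - τ • (r⁻¹ • x) = (1 - r⁻¹ * τ) • x := by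
      rw [smul_smul, sub_smul, one_smul, mul_comm]
    have hnp : ‖(1 + r⁻¹ * τ) • x‖ = |1 + r⁻¹ * τ| * r := by
      rw [norm_smul, Real.norm_eq_abs]
    have hnm : ‖(1 - r⁻¹ * τ) • x‖ = |1 - r⁻¹ * τ| * r := by
      rw [norm_smul, Real.norm_eq_abs]
    have hτd : τ ^ (-(1+2*s)) = r^(-(1+2*s)) * (r⁻¹*τ)^(-(1+2*s)) := by
      rw [← Real.mul_rpow hr.le (by positivity)]
      congr 1
      field_simp
    rw [hv, hv, hv, hplus, hminus, hnp, hnm,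
      Real.mul_rpow (abs_nonneg _) hr.le, Real.mul_rpow (abs_nonneg _) hr.le, hτd,
      gfun]
    have hrg : r^γ * r^(-(1+2*s)) = r^(γ-1-2*s) := by
      rw [← Real.rpow_add hr]
      congr 1
      ring
    calc (|1 + r⁻¹*τ|^γ * r^γ + |1 - r⁻¹*τ|^γ * r^γ - 2 * r^γ)
          * (r^(-(1+2*s)) * (r⁻¹*τ)^(-(1+2*s)))
        = (r^γ * r^(-(1+2*s))) *
            ((|1 + r⁻¹*τ|^γ + |1 - r⁻¹*τ|^γ - 2) * (r⁻¹*τ)^(-(1+2*s))) := by ring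
      _ = r^(γ-1-2*s) * ((|1 + r⁻¹*τ|^γ + |1 - r⁻¹*τ|^γ - 2) * (r⁻¹*τ)^(-(1+2*s))) := by
          rw [hrg]
  rw [Iop, setIntegral_congr_fun measurableSet_Ioi key]
  rw [MeasureTheory.integral_const_mul]
  rw [integral_comp_mul_left_Ioi (gfun γ s) 0 (inv_pos.2 hr)]
  rw [mul_zero, inv_inv, smul_eq_mul]
  rw [show γ - 2*s = (γ-1-2*s) + 1 by ring, Real.rpow_add_one hr.ne']
  ring

theorem stmt_5 (N : ℕ) (hN : 1 ≤ N)
    (s Cs : ℝ) (hs : s ∈ Ioo (1/2 : ℝ) 1) (hCs : 0 < Cs)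
    (γ : ℝ) (hγ : γ ∈ Ioo (0:ℝ) (2*s))
    (v : E N → ℝ) (hv : ∀ x, v x = ‖x‖ ^ γ)
    (cγ : ℝ)
    (hcγ : cγ = Cs * ∫ τ in Ioi (0:ℝ),
        (|1 + τ| ^ γ + |1 - τ| ^ γ - 2) * τ ^ (-(1 + 2*s))) :
    (∀ x : E N, x ≠ 0 → Iop N s Cs v (‖x‖⁻¹ • x) x = cγ * ‖x‖ ^ (γ - 2*s)) ∧
    (γ ∈ Ioo (0:ℝ) (2*s - 1) → cγ < 0) ∧
    (γ = 2*s - 1 → cγ = 0) ∧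
    (γ ∈ Ioo (2*s - 1) 1 → 0 < cγ) := by
  obtain ⟨hs1, hs2⟩ := hs
  obtain ⟨hγ0, hγ2s⟩ := hγ
  have hcγ' : cγ = Cs * ∫ τ in Ioi (0:ℝ), gfun γ s τ := hcγ
  refine ⟨?_, ?_, ?_, ?_⟩
  · intro x hx
    rw [hcγ']
    exact Iop_scaling hγ0 (by linarith) v hv x hx
  · rintro ⟨h1, h2⟩
    have hγ1 : γ < 1 := by linarith
    have hlt := Int_lt hγ0 hγ1 (show 1/2 < (γ+1)/2 by linarith)
      (show (γ+1)/2 < s by linarith) hs2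
    rw [Int_zero hγ0 hγ1] at hlt
    rw [hcγ']
    exact mul_neg_of_pos_of_neg hCs hlt
  · intro hcase
    have hγ1 : γ < 1 := by linarith
    have hz : ∫ τ in Ioi (0:ℝ), gfun γ s τ = 0 := by
      rw [show s = (γ+1)/2 by linarith]
      exact Int_zero hγ0 hγ1
    rw [hcγ', hz, mul_zero]
  · rintro ⟨h1, h2⟩
    have hγ1 : γ < 1 := h2
    have hlt := Int_lt hγ0 hγ1 hs1 (show s < (γ+1)/2 by linarith)
      (show (γ+1)/2 < 1 by linarith)
    rw [Int_zero hγ0 hγ1] at hlt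
    rw [hcγ']
    exact mul_pos hCs hlt
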